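/- For every x ∈ ℝ, the wrapped Gaussian density converges pointwise to the uniform density on the circle as the variance tends to infinity: lim_{V → ∞} (1/√(2πV)) · ∑_{k ∈ ℤ} exp( −(x + 2πk)² / (2V) ) = 1/(2π). -/

import Mathlib

open Real Filter Complex

lemma wg_norm_exp (x V : ℝ) (k : ℤ) :
    ‖Complex.exp (-(V/2) * (k:ℂ)^2 - Complex.I * x * k)‖
      = Real.exp (-(V/2) * (k:ℝ)^2) := by
  rw [Complex.norm_exp]
  norm_num [Complex.sub_re, Complex.mul_re, Complex.mul_im]
  left
  simp [pow_two, Complex.mul_re]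

lemma wg_summable_bound : Summable fun n : ℤ => Real.exp (-(n:ℝ)^2/2) := by
  have hgeo : Summable fun n : ℕ => Real.exp (-(n:ℝ)/2) := by
    have := summable_geometric_of_lt_one (Real.exp_pos (-(1:ℝ)/2)).le
      (Real.exp_lt_one_iff.2 (by norm_num))
    refine this.congr fun n => ?_
    rw [← Real.exp_nat_mul]; ring_nf
  have key : ∀ n : ℕ, Real.exp (-(n:ℝ)^2/2) ≤ Real.exp (-(n:ℝ)/2) := by
    intro n
    apply Real.exp_le_exp.2
    have : (n:ℝ) ≤ (n:ℝ)^2 := by exact_mod_cast Nat.le_self_pow two_ne_zero n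
    linarith
  apply Summable.of_nat_of_neg
  · exact hgeo.of_nonneg_of_le (fun n => (Real.exp_pos _).le) key
  · refine hgeo.of_nonneg_of_le (fun n => (Real.exp_pos _).le) fun n => ?_
    simpa using key n

noncomputable def wgT (x V : ℝ) : ℂ :=
  ∑' n : ℤ, Complex.exp (-(V/2) * (n:ℂ)^2 - Complex.I * x * n)

lemma wgT_tendsto (x : ℝ) : Tendsto (fun V => wgT x V) atTop (nhds 1) := by
  have h : Tendsto (fun V => wgT x V) atTop
      (nhds (∑' n : ℤ, if n = (0:ℤ) then (1:ℂ) else 0)) := by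
    apply tendsto_tsum_of_dominated_convergence
      (bound := fun n : ℤ => Real.exp (-(n:ℝ)^2/2)) wg_summable_bound
    · intro k
      by_cases hk : k = 0
      · simp [hk]
      · simp only [hk, if_false]
        rw [tendsto_zero_iff_norm_tendsto_zero]
        simp only [wg_norm_exp]
        have hk2 : (0:ℝ) < (k:ℝ)^2 := by
          have : (k:ℝ) ≠ 0 := Int.cast_ne_zero.2 hk
          positivity
        have h1 : Tendsto (fun V : ℝ => -(V/2) * (k:ℝ)^2) atTop atBot := by
          apply Tendsto.atBot_mul_const hk2
          exact tendsto_neg_atTop_atBot.comp (tendsto_id.atTop_div_const (by norm_num))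
        exact Real.tendsto_exp_atBot.comp h1
    · filter_upwards [eventually_ge_atTop (1:ℝ)] with V hV k
      rw [wg_norm_exp]
      apply Real.exp_le_exp.2
      have hk2 : (0:ℝ) ≤ (k:ℝ)^2 := sq_nonneg _
      nlinarith
  simpa using h

theorem wrapped_gaussian_tendsto_uniform (x : ℝ) :
    Tendsto
      (fun V : ℝ =>
        (1 / Real.sqrt (2 * Real.pi * V)) *
          ∑' k : ℤ, Real.exp (-(x + 2 * Real.pi * (k : ℝ)) ^ 2 / (2 * V)))
      atTop (nhds (1 / (2 * Real.pi))) := by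
  have key : ∀ V : ℝ, 0 < V →
      (∑' k : ℤ, Real.exp (-(x + 2 * Real.pi * (k : ℝ)) ^ 2 / (2 * V)))
        = Real.sqrt (V / (2 * Real.pi)) * (wgT x V).re := by
    intro V hV
    have ha : (0:ℝ) < V / (2 * Real.pi) := by positivity
    have ha' : 0 < ((V / (2 * Real.pi) : ℝ) : ℂ).re := by rw [Complex.ofReal_re]; exact ha
    have hP := Complex.tsum_exp_neg_quadratic ha' (-Complex.I * (x / (2 * Real.pi)))
    have hπ : (Real.pi : ℝ) ≠ 0 := Real.pi_ne_zero
    have hL : (∑' n : ℤ, Complex.exp (-(Real.pi:ℂ) * ((V / (2 * Real.pi) : ℝ) : ℂ) * (n:ℂ) ^ 2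
        + 2 * (Real.pi:ℂ) * (-Complex.I * (x / (2 * Real.pi))) * (n:ℂ))) = wgT x V := by
      unfold wgT
      congr 1
      ext n
      congr 1
      have hπ' : (Real.pi:ℂ) ≠ 0 := by exact_mod_cast hπ
      push_cast
      field_simp
      ring
    have hR : (∑' n : ℤ, Complex.exp (-(Real.pi:ℂ) / ((V / (2 * Real.pi) : ℝ) : ℂ)
        * ((n:ℂ) + Complex.I * (-Complex.I * (x / (2 * Real.pi)))) ^ 2))
        = ((∑' k : ℤ, Real.exp (-(x + 2 * Real.pi * (k : ℝ)) ^ 2 / (2 * V)) : ℝ) : ℂ) := by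
      rw [Complex.ofReal_tsum]
      congr 1
      ext n
      rw [Complex.ofReal_exp]
      congr 1
      have hI : Complex.I * (-Complex.I * ((x:ℂ) / (2 * (Real.pi:ℂ)))) = (x:ℂ) / (2 * (Real.pi:ℂ)) := by
        rw [← mul_assoc, mul_neg, Complex.I_mul_I, neg_neg, one_mul]
      rw [hI]
      have hV' : (V:ℂ) ≠ 0 := by exact_mod_cast hV.ne'
      have hπ' : (Real.pi:ℂ) ≠ 0 := by exact_mod_cast hπ
      push_cast
      field_simp
      ring
    rw [hL, hR] at hP
    have hcpow : ((V / (2 * Real.pi) : ℝ) : ℂ) ^ (1/2 : ℂ)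
        = (Real.sqrt (V / (2 * Real.pi)) : ℂ) := by
      rw [show (1/2 : ℂ) = ((1/2 : ℝ) : ℂ) by norm_num,
        ← Complex.ofReal_cpow ha.le, Real.sqrt_eq_rpow]
    rw [hcpow] at hP
    have hs : (0:ℝ) < Real.sqrt (V / (2 * Real.pi)) := Real.sqrt_pos.2 ha
    have hP' : ((∑' k : ℤ, Real.exp (-(x + 2 * Real.pi * (k : ℝ)) ^ 2 / (2 * V)) : ℝ) : ℂ)
        = (Real.sqrt (V / (2 * Real.pi)) : ℂ) * wgT x V := by
      have hsc : (Real.sqrt (V / (2 * Real.pi)) : ℂ) ≠ 0 := by exact_mod_cast hs.ne'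
      rw [hP, ← mul_assoc, mul_one_div, div_self hsc, one_mul]
    have := congrArg Complex.re hP'
    simpa [Complex.re_ofReal_mul] using this
  have hlim : Tendsto (fun V : ℝ => (1 / (2 * Real.pi)) * (wgT x V).re) atTop
      (nhds (1 / (2 * Real.pi))) := by
    have h1 : Tendsto (fun V : ℝ => (wgT x V).re) atTop (nhds 1) := by
      have := (Complex.continuous_re.tendsto 1).comp (wgT_tendsto x)
      exact this
    simpa using h1.const_mul (1 / (2 * Real.pi))
  apply hlim.congr'
  filter_upwards [eventually_gt_atTop (0:ℝ)] with V hV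
  rw [key V hV]
  have h2π : (0:ℝ) < 2 * Real.pi := by positivity
  have hsV : (0:ℝ) < Real.sqrt V := Real.sqrt_pos.2 hV
  have hs2π : (0:ℝ) < Real.sqrt (2 * Real.pi) := Real.sqrt_pos.2 h2π
  have e1 : Real.sqrt (2 * Real.pi * V) = Real.sqrt (2 * Real.pi) * Real.sqrt V :=
    Real.sqrt_mul h2π.le V
  have e2 : Real.sqrt (V / (2 * Real.pi)) = Real.sqrt V / Real.sqrt (2 * Real.pi) :=
    Real.sqrt_div hV.le _
  have e3 : Real.sqrt (2 * Real.pi) * Real.sqrt (2 * Real.pi) = 2 * Real.pi :=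
    Real.mul_self_sqrt h2π.le
  rw [e1, e2]
  rw [show (2 * Real.pi) = Real.sqrt (2 * Real.pi) * Real.sqrt (2 * Real.pi) from e3.symm]
  field_simp
  rw [Real.sqrt_sq (Real.sqrt_nonneg _)]
  ring
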